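/- Let F be a field, q ∈ F with q ≠ 0 and q² ≠ 1. For all integers a, b, c, m the following identity holds: [b+2c−m]_q·[b+c]_q·[a−b+2]_q − (q^(m−c) + q^(c−m))·[b+c−1]_q·[b+c]_q·[a−b+1]_q + [b+m−1]_q·[b+c−1]_q·[a−b]_q = [c−m+1]_q·[a+b+2c]_q. -/

import Mathlib

set_option maxHeartbeats 1000000

noncomputable def qint {F : Type*} [Field F] (q : F) (n : ℤ) : F :=
  (q ^ n - q ^ (-n)) / (q - q⁻¹)

theorem e_alpha0_identity {F : Type*} [Field F] (q : F) (hq : q ≠ 0) (hq2 : q ^ 2 ≠ 1)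
    (a b c m : ℤ) :
    qint q (b + 2 * c - m) * qint q (b + c) * qint q (a - b + 2)
      - (q ^ (m - c) + q ^ (c - m)) * qint q (b + c - 1) * qint q (b + c) * qint q (a - b + 1)
      + qint q (b + m - 1) * qint q (b + c - 1) * qint q (a - b)
      = qint q (c - m + 1) * qint q (a + b + 2 * c) := by
  have hE : q ^ 2 - 1 ≠ 0 := sub_ne_zero.mpr hq2
  have h1 : ∀ n : ℤ, q ^ n ≠ 0 := fun n => zpow_ne_zero n hq
  have hden : q - q⁻¹ ≠ 0 := by
    intro h
    apply hq2
    have := sub_eq_zero.mp h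
    field_simp at this
    linear_combination this
  set d := q - q⁻¹ with hd
  set X : ℤ → F := fun n => q ^ n - q ^ (-n) with hX
  have hqint : ∀ n : ℤ, qint q n = X n / d := fun n => rfl
  have key : X (b + 2 * c - m) * X (b + c) * X (a - b + 2)
      - (q ^ (m - c) + q ^ (c - m)) * (X (b + c - 1) * X (b + c) * X (a - b + 1))
      + X (b + m - 1) * X (b + c - 1) * X (a - b)
      = (X (c - m + 1) * X (a + b + 2 * c)) * d := by
    rw [hd]
    simp only [hX]
    rw [show q - q⁻¹ = (q ^ 2 - 1) / q from by field_simp]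
    simp only [two_mul, sub_eq_add_neg, neg_add, neg_neg, zpow_add₀ hq, zpow_neg, zpow_one]
    have hA := h1 a
    have hB := h1 b
    have hC := h1 c
    have hM := h1 m
    generalize q ^ a = A at hA ⊢
    generalize q ^ b = B at hB ⊢
    generalize q ^ c = C at hC ⊢
    generalize q ^ m = M at hM ⊢
    field_simp
    have hAq : A * q ^ (2:ℤ) ≠ 0 := mul_ne_zero hA (zpow_ne_zero 2 hq)
    have h5 : A * q ^ (2:ℤ) + (-(B * B)) / (A * q ^ (2:ℤ))
        = (A * q ^ (2:ℤ) * (A * q ^ (2:ℤ)) + -(B * B)) / (A * q ^ (2:ℤ)) := by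
      rw [eq_div_iff hAq, add_mul, div_mul_cancel₀ _ hAq]
    ring
  calc qint q (b + 2 * c - m) * qint q (b + c) * qint q (a - b + 2)
      - (q ^ (m - c) + q ^ (c - m)) * qint q (b + c - 1) * qint q (b + c) * qint q (a - b + 1)
      + qint q (b + m - 1) * qint q (b + c - 1) * qint q (a - b)
      = (X (b + 2 * c - m) * X (b + c) * X (a - b + 2)
          - (q ^ (m - c) + q ^ (c - m)) * (X (b + c - 1) * X (b + c) * X (a - b + 1))
          + X (b + m - 1) * X (b + c - 1) * X (a - b)) / (d * d * d) := by
        simp only [hqint]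
        field_simp
    _ = (X (c - m + 1) * X (a + b + 2 * c)) * d / (d * d * d) := by rw [key]
    _ = qint q (c - m + 1) * qint q (a + b + 2 * c) := by
        simp only [hqint]
        field_simp
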